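/- The quantum interchange law holds: for every Σ_i x_i ⊗ y_i ∈ H1□H1 and every u, v ∈ H1 (with products taken in the smash product H1), Σ_i (x_i u)∘(y_i v) = Σ_i (x_i ∘ y_i)(u ∘ v). (Part of Theorem 2.6.) -/

import Mathlib

open TensorProduct

noncomputable section

variable (k A H : Type*) [Field k] [Ring A] [Ring H]
  [HopfAlgebra k A] [HopfAlgebra k H]

/-- `t(a⊗h) = d(a)h`. -/
def tmap (d : A →ₗ[k] H) : A ⊗[k] H →ₗ[k] H :=
  LinearMap.mul' k H ∘ₗ map d LinearMap.id

/-- `s(a⊗h) = ε(a)h`. -/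
def smap : A ⊗[k] H →ₗ[k] H :=
  (TensorProduct.lid k H).toLinearMap ∘ₗ map (Coalgebra.counit : A →ₗ[k] k) LinearMap.id

/-- `i(h) = 1⊗h`. -/
def imap : H →ₗ[k] A ⊗[k] H := TensorProduct.mk k A H 1

/-- The tensor-product coproduct `Δ(a⊗h) = (a₁⊗h₁) ⊗ (a₂⊗h₂)` on `H1 = A ⊗ H`. -/
def comul1 : A ⊗[k] H →ₗ[k] (A ⊗[k] H) ⊗[k] (A ⊗[k] H) :=
  (tensorTensorTensorComm k A A H H).toLinearMap ∘ₗ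
    map (Coalgebra.comul : A →ₗ[k] A ⊗[k] A) (Coalgebra.comul : H →ₗ[k] H ⊗[k] H)

/-- The tensor-product counit `ε(a⊗h) = ε(a)ε(h)` on `H1 = A ⊗ H`. -/
def counit1 : A ⊗[k] H →ₗ[k] k :=
  (TensorProduct.lid k k).toLinearMap ∘ₗ
    map (Coalgebra.counit : A →ₗ[k] k) (Coalgebra.counit : H →ₗ[k] k)

/-- The left coaction `DL = (t⊗id)Δ`. -/
def DLmap (d : A →ₗ[k] H) : A ⊗[k] H →ₗ[k] H ⊗[k] (A ⊗[k] H) :=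
  map (tmap k A H d) LinearMap.id ∘ₗ comul1 k A H

/-- The right coaction `DR = (id⊗s)Δ`. -/
def DRmap : A ⊗[k] H →ₗ[k] (A ⊗[k] H) ⊗[k] H :=
  map LinearMap.id (smap k A H) ∘ₗ comul1 k A H

/-- The second product `(a⊗h)∘(b⊗g) = ε(h) ab ⊗ g`. -/
def circ : (A ⊗[k] H) ⊗[k] (A ⊗[k] H) →ₗ[k] A ⊗[k] H :=
  map (LinearMap.mul' k A)
      ((TensorProduct.lid k H).toLinearMap ∘ₗ map (Coalgebra.counit : H →ₗ[k] k) LinearMap.id)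
    ∘ₗ (tensorTensorTensorComm k A H A H).toLinearMap

/-- The quantum groupoid antipode `𝒮(a⊗h) = S(a₁) ⊗ d(a₂)h`. -/
def SS (d : A →ₗ[k] H) : A ⊗[k] H →ₗ[k] A ⊗[k] H :=
  map (HopfAlgebra.antipode (R := k) : A →ₗ[k] A) (tmap k A H d)
    ∘ₗ (TensorProduct.assoc k A A H).toLinearMap
    ∘ₗ map (Coalgebra.comul : A →ₗ[k] A ⊗[k] A) LinearMap.id

/-- The smash product multiplication `(a⊗h)(b⊗g) = a(h₁▷b) ⊗ h₂g`. -/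
def smashMul (act : H ⊗[k] A →ₗ[k] A) :
    (A ⊗[k] H) ⊗[k] (A ⊗[k] H) →ₗ[k] A ⊗[k] H :=
  map (LinearMap.mul' k A) LinearMap.id
  ∘ₗ (TensorProduct.assoc k A A H).symm.toLinearMap
  ∘ₗ map LinearMap.id
      (map act (LinearMap.mul' k H)
        ∘ₗ (tensorTensorTensorComm k H H A H).toLinearMap)
  ∘ₗ (TensorProduct.assoc k A (H ⊗[k] H) (A ⊗[k] H)).toLinearMap
  ∘ₗ map (map LinearMap.id (Coalgebra.comul : H →ₗ[k] H ⊗[k] H)) LinearMap.id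

/-- The cotensor product `H1□H1`. -/
def cot (d : A →ₗ[k] H) : Set ((A ⊗[k] H) ⊗[k] (A ⊗[k] H)) :=
  {x | (TensorProduct.assoc k (A ⊗[k] H) H (A ⊗[k] H)).toLinearMap
        (map (DRmap k A H) LinearMap.id x) = map LinearMap.id (DLmap k A H d) x}

/-- A Hopf (algebra) crossed module. -/
structure HopfCrossedModule (act : H ⊗[k] A →ₗ[k] A) (d : A →ₗ[k] H) : Prop where
  /-- `(hg)▷a = h▷(g▷a)` -/
  act_mul : ∀ (h g : H) (a : A), act ((h * g) ⊗ₜ[k] a) = act (h ⊗ₜ[k] act (g ⊗ₜ[k] a))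
  /-- `1▷a = a` -/
  act_one : ∀ a : A, act ((1 : H) ⊗ₜ[k] a) = a
  /-- `h▷(ab) = (h₁▷a)(h₂▷b)` -/
  act_mul_alg : act ∘ₗ map LinearMap.id (LinearMap.mul' k A)
      = LinearMap.mul' k A ∘ₗ map act act
          ∘ₗ (tensorTensorTensorComm k H H A A).toLinearMap
          ∘ₗ map (Coalgebra.comul : H →ₗ[k] H ⊗[k] H) LinearMap.id
  /-- `h▷1 = ε(h)1` -/
  act_unit : ∀ h : H, act (h ⊗ₜ[k] (1 : A)) = (Coalgebra.counit h : k) • (1 : A)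
  /-- `Δ(h▷a) = (h₁▷a₁)⊗(h₂▷a₂)` -/
  act_comul : (Coalgebra.comul : A →ₗ[k] A ⊗[k] A) ∘ₗ act
      = map act act ∘ₗ (tensorTensorTensorComm k H H A A).toLinearMap
          ∘ₗ map (Coalgebra.comul : H →ₗ[k] H ⊗[k] H) (Coalgebra.comul : A →ₗ[k] A ⊗[k] A)
  /-- `ε(h▷a) = ε(h)ε(a)` -/
  act_counit : ∀ (h : H) (a : A),
      (Coalgebra.counit (act (h ⊗ₜ[k] a)) : k) = Coalgebra.counit h * Coalgebra.counit a
  /-- `h₁ ⊗ (h₂▷a) = h₂ ⊗ (h₁▷a)` -/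
  act_cocomm : map LinearMap.id act ∘ₗ (TensorProduct.assoc k H H A).toLinearMap
        ∘ₗ map (Coalgebra.comul : H →ₗ[k] H ⊗[k] H) LinearMap.id
      = map LinearMap.id act ∘ₗ (TensorProduct.assoc k H H A).toLinearMap
        ∘ₗ map ((TensorProduct.comm k H H).toLinearMap
              ∘ₗ (Coalgebra.comul : H →ₗ[k] H ⊗[k] H)) LinearMap.id
  /-- `d` is multiplicative -/
  d_mul : ∀ a b : A, d (a * b) = d a * d b
  /-- `d(1) = 1` -/
  d_one : d 1 = 1
  /-- `d` is comultiplicative -/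
  d_comul : (Coalgebra.comul : H →ₗ[k] H ⊗[k] H) ∘ₗ d
      = map d d ∘ₗ (Coalgebra.comul : A →ₗ[k] A ⊗[k] A)
  /-- `ε∘d = ε` -/
  d_counit : (Coalgebra.counit : H →ₗ[k] k) ∘ₗ d = (Coalgebra.counit : A →ₗ[k] k)
  /-- `d(h▷a) = h₁ d(a) S(h₂)` -/
  d_act : d ∘ₗ act = LinearMap.mul' k H
      ∘ₗ map LinearMap.id (LinearMap.mul' k H
            ∘ₗ map LinearMap.id (HopfAlgebra.antipode (R := k) : H →ₗ[k] H)
            ∘ₗ (TensorProduct.comm k H H).toLinearMap)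
      ∘ₗ (TensorProduct.assoc k H H H).toLinearMap
      ∘ₗ map (Coalgebra.comul : H →ₗ[k] H ⊗[k] H) d
  /-- `d(a)▷b = a₁ b S(a₂)` -/
  crossed : act ∘ₗ map d LinearMap.id = LinearMap.mul' k A
      ∘ₗ map LinearMap.id (LinearMap.mul' k A
            ∘ₗ map LinearMap.id (HopfAlgebra.antipode (R := k) : A →ₗ[k] A)
            ∘ₗ (TensorProduct.comm k A A).toLinearMap)
      ∘ₗ (TensorProduct.assoc k A A A).toLinearMap
      ∘ₗ map (Coalgebra.comul : A →ₗ[k] A ⊗[k] A) LinearMap.id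


/-- Right multiplication by `u` in the smash product `H1 = A⋊H`. -/
def rmul (act : H ⊗[k] A →ₗ[k] A) (u : A ⊗[k] H) : A ⊗[k] H →ₗ[k] A ⊗[k] H :=
  smashMul k A H act ∘ₗ (TensorProduct.mk k (A ⊗[k] H) (A ⊗[k] H)).flip u


set_option maxHeartbeats 1000000
set_option synthInstance.maxHeartbeats 400000

open Coalgebra in
lemma counit_sum_right {a : A} {ι : Type*} (r : Coalgebra.Repr k a ι) {B : Type*} [AddCommGroup B]
    [Module k B] (f : A →ₗ[k] B) :
    ∑ i ∈ r.index, (Coalgebra.counit (r.right i) : k) • f (r.left i) = f a := by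
  have h := Coalgebra.sum_map_tmul_counit_eq (R := k) f a (repr := r)
  have := congrArg (TensorProduct.rid k B) h
  rw [map_sum] at this
  simp only [TensorProduct.rid_tmul, one_smul] at this
  exact this

open Coalgebra in
lemma coassoc_sum {a : A} {ι κ Λ : Type*} (r : Coalgebra.Repr k a ι) (r1 : ∀ i, Coalgebra.Repr k (r.left i) κ)
    (r2 : ∀ i, Coalgebra.Repr k (r.right i) Λ) {B : Type*} [AddCommGroup B] [Module k B]
    (f : A ⊗[k] (A ⊗[k] A) →ₗ[k] B) :
    ∑ i ∈ r.index, ∑ j ∈ (r1 i).index,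
        f ((r1 i).left j ⊗ₜ[k] ((r1 i).right j ⊗ₜ[k] r.right i))
      = ∑ i ∈ r.index, ∑ j ∈ (r2 i).index,
        f (r.left i ⊗ₜ[k] ((r2 i).left j ⊗ₜ[k] (r2 i).right j)) := by
  have := congrArg f (Coalgebra.sum_tmul_tmul_eq r r1 r2)
  simpa only [map_sum] using this

lemma circ_tmul (p r : A) (q s : H) :
    circ k A H ((p ⊗ₜ[k] q) ⊗ₜ[k] (r ⊗ₜ[k] s))
      = (Coalgebra.counit q : k) • ((p * r) ⊗ₜ[k] s) := by
  simp [circ, TensorProduct.smul_tmul', LinearMap.mul'_apply, TensorProduct.tmul_smul]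

lemma smashMul_tmul (act : H ⊗[k] A →ₗ[k] A) (p c : A) (q f : H) {ι : Type*} (r : Coalgebra.Repr k q ι) :
    smashMul k A H act ((p ⊗ₜ[k] q) ⊗ₜ[k] (c ⊗ₜ[k] f))
      = ∑ i ∈ r.index, (p * act (r.left i ⊗ₜ[k] c)) ⊗ₜ[k] (r.right i * f) := by
  simp only [smashMul, LinearMap.coe_comp, Function.comp_apply, LinearEquiv.coe_coe,
    TensorProduct.map_tmul, LinearMap.id_coe, id_eq]
  rw [show (Coalgebra.comul q : H ⊗[k] H) = ∑ i ∈ r.index, r.left i ⊗ₜ[k] r.right i from r.eq.symm]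
  simp [TensorProduct.tmul_sum, TensorProduct.sum_tmul, LinearMap.mul'_apply,
    tensorTensorTensorComm_tmul]

open Coalgebra in
lemma counit_sum_left {a : A} {ι : Type*} (r : Coalgebra.Repr k a ι) {B : Type*} [AddCommGroup B]
    [Module k B] (f : A →ₗ[k] B) :
    ∑ i ∈ r.index, (Coalgebra.counit (r.left i) : k) • f (r.right i) = f a := by
  have h := Coalgebra.sum_counit_tmul_map_eq (R := k) f a (repr := r)
  have := congrArg (TensorProduct.lid k B) h
  rw [map_sum] at this
  simp only [TensorProduct.lid_tmul, one_smul] at this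
  exact this

lemma DLmap_tmul (d : A →ₗ[k] H) (b : A) (g : H) {ι κ : Type*} (rb : Coalgebra.Repr k b ι)
    (rg : Coalgebra.Repr k g κ) :
    DLmap k A H d (b ⊗ₜ[k] g)
      = ∑ i ∈ rb.index, ∑ j ∈ rg.index,
          (d (rb.left i) * rg.left j) ⊗ₜ[k] (rb.right i ⊗ₜ[k] rg.right j) := by
  simp only [DLmap, comul1, LinearMap.coe_comp, Function.comp_apply, LinearEquiv.coe_coe,
    TensorProduct.map_tmul]
  rw [show (Coalgebra.comul b : A ⊗[k] A) = ∑ i ∈ rb.index, rb.left i ⊗ₜ[k] rb.right i from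
      rb.eq.symm,
    show (Coalgebra.comul g : H ⊗[k] H) = ∑ j ∈ rg.index, rg.left j ⊗ₜ[k] rg.right j from
      rg.eq.symm]
  simp only [TensorProduct.tmul_sum, TensorProduct.sum_tmul, map_sum,
    tensorTensorTensorComm_tmul, TensorProduct.map_tmul, tmap, LinearMap.coe_comp,
    Function.comp_apply, LinearMap.mul'_apply, LinearMap.id_coe, id_eq]
  rw [Finset.sum_comm]

/-- `ρ((a⊗h)⊗κ) = ε(h)•(a⊗κ)`. -/
def rho : (A ⊗[k] H) ⊗[k] H →ₗ[k] A ⊗[k] H :=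
  map LinearMap.id
      ((TensorProduct.lid k H).toLinearMap ∘ₗ map (Coalgebra.counit : H →ₗ[k] k) LinearMap.id)
    ∘ₗ (TensorProduct.assoc k A H H).toLinearMap

lemma rho_tmul (a : A) (h κ : H) :
    rho k A H ((a ⊗ₜ[k] h) ⊗ₜ[k] κ) = (Coalgebra.counit h : k) • (a ⊗ₜ[k] κ) := by
  simp [rho, TensorProduct.tmul_smul]

/-- The auxiliary map `φ` used in the interchange proof. -/
def phi (act : H ⊗[k] A →ₗ[k] A) (u v : A ⊗[k] H) :
    (A ⊗[k] H) ⊗[k] (H ⊗[k] (A ⊗[k] H)) →ₗ[k] A ⊗[k] H :=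
  circ k A H ∘ₗ map (rmul k A H act u ∘ₗ rho k A H) (rmul k A H act v)
    ∘ₗ (TensorProduct.assoc k (A ⊗[k] H) H (A ⊗[k] H)).symm.toLinearMap

lemma rmul_apply (act : H ⊗[k] A →ₗ[k] A) (u x : A ⊗[k] H) :
    rmul k A H act u x = smashMul k A H act (x ⊗ₜ[k] u) := rfl

lemma phi_tmul (act : H ⊗[k] A →ₗ[k] A) (u v : A ⊗[k] H) (a : A) (h κ : H)
    (w : A ⊗[k] H) :
    phi k A H act u v ((a ⊗ₜ[k] h) ⊗ₜ[k] (κ ⊗ₜ[k] w))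
      = (Coalgebra.counit h : k) •
          circ k A H (smashMul k A H act ((a ⊗ₜ[k] κ) ⊗ₜ[k] u)
            ⊗ₜ[k] smashMul k A H act (w ⊗ₜ[k] v)) := by
  simp only [phi, LinearMap.coe_comp, Function.comp_apply, LinearEquiv.coe_coe,
    TensorProduct.assoc_symm_tmul, TensorProduct.map_tmul, rho_tmul, rmul_apply]
  simp only [map_smul, ← TensorProduct.smul_tmul']

lemma rho_DR (w : A ⊗[k] H) : rho k A H (DRmap k A H w) = w := by
  have : rho k A H ∘ₗ DRmap k A H = LinearMap.id := by
    apply TensorProduct.ext'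
    intro a h
    obtain ⟨ra, rh⟩ := (Coalgebra.Repr.arbitrary k a, Coalgebra.Repr.arbitrary k h)
    simp only [DRmap, comul1, LinearMap.coe_comp, Function.comp_apply, LinearEquiv.coe_coe,
      TensorProduct.map_tmul, LinearMap.id_coe, id_eq]
    rw [show (Coalgebra.comul a : A ⊗[k] A) = ∑ i ∈ ra.index, ra.left i ⊗ₜ[k] ra.right i from
        ra.eq.symm,
      show (Coalgebra.comul h : H ⊗[k] H) = ∑ j ∈ rh.index, rh.left j ⊗ₜ[k] rh.right j from
        rh.eq.symm]
    simp only [TensorProduct.tmul_sum, TensorProduct.sum_tmul, map_sum,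
      tensorTensorTensorComm_tmul, TensorProduct.map_tmul, smap, LinearMap.coe_comp,
      Function.comp_apply, LinearEquiv.coe_coe, TensorProduct.lid_tmul, LinearMap.id_coe, id_eq,
      rho_tmul, TensorProduct.tmul_smul, map_smul]
    have step1 : ∀ j ∈ rh.index,
        (∑ i ∈ ra.index, (Coalgebra.counit (ra.right i) : k) •
          ((Coalgebra.counit (rh.left j) : k) • ra.left i ⊗ₜ[k] rh.right j))
        = (Coalgebra.counit (rh.left j) : k) • (a ⊗ₜ[k] rh.right j) := by
      intro j _
      simpa using counit_sum_right k A ra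
        ((Coalgebra.counit (rh.left j) : k) • (TensorProduct.mk k A H).flip (rh.right j))
    rw [Finset.sum_congr rfl step1]
    exact counit_sum_left k H rh (TensorProduct.mk k A H a)
  exact LinearMap.congr_fun this w

open Coalgebra in
lemma lemC (act : H ⊗[k] A →ₗ[k] A) (d : A →ₗ[k] H) (hcm : HopfCrossedModule k A H act d)
    (b z : A) {ι : Type*} (rb : Coalgebra.Repr k b ι) :
    ∑ i ∈ rb.index, act (d (rb.left i) ⊗ₜ[k] z) * rb.right i = b * z := by
  classical
  set rb1 : ∀ i : rb.ι, Coalgebra.Repr k (rb.left i) (A × A) := fun i => Coalgebra.Repr.arbitrary k _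
  set rb2 : ∀ i : rb.ι, Coalgebra.Repr k (rb.right i) (A × A) := fun i => Coalgebra.Repr.arbitrary k _
  set S : A →ₗ[k] A := (HopfAlgebra.antipode (R := k) : A →ₗ[k] A) with hS
  set T : A ⊗[k] (A ⊗[k] A) →ₗ[k] A :=
    LinearMap.mul' k A
      ∘ₗ map (LinearMap.mul' k A ∘ₗ map LinearMap.id (LinearMap.mulLeft k z ∘ₗ S)) LinearMap.id
      ∘ₗ (TensorProduct.assoc k A A A).symm.toLinearMap with hT
  have T_apply : ∀ x y w : A, T (x ⊗ₜ[k] (y ⊗ₜ[k] w)) = x * (z * S y) * w := by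
    intro x y w
    simp [hT, LinearMap.mul'_apply]
  have hc : ∀ i ∈ rb.index, act (d (rb.left i) ⊗ₜ[k] z)
      = ∑ p ∈ (rb1 i).index, (rb1 i).left p * (z * S ((rb1 i).right p)) := by
    intro i _
    have hx := LinearMap.congr_fun hcm.crossed ((rb.left i) ⊗ₜ[k] z)
    simp only [LinearMap.coe_comp, Function.comp_apply, TensorProduct.map_tmul,
      LinearMap.id_coe, id_eq] at hx
    rw [show (Coalgebra.comul (rb.left i) : A ⊗[k] A)
        = ∑ p ∈ (rb1 i).index, (rb1 i).left p ⊗ₜ[k] (rb1 i).right p from (rb1 i).eq.symm] at hx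
    simp only [TensorProduct.sum_tmul, map_sum, LinearEquiv.coe_coe, TensorProduct.assoc_tmul,
      TensorProduct.map_tmul, TensorProduct.comm_tmul, LinearMap.mul'_apply, LinearMap.id_coe,
      id_eq] at hx
    exact hx
  calc ∑ i ∈ rb.index, act (d (rb.left i) ⊗ₜ[k] z) * rb.right i
      = ∑ i ∈ rb.index, ∑ p ∈ (rb1 i).index,
          T ((rb1 i).left p ⊗ₜ[k] ((rb1 i).right p ⊗ₜ[k] rb.right i)) := by
        refine Finset.sum_congr rfl fun i hi => ?_
        rw [hc i hi, Finset.sum_mul]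
        exact Finset.sum_congr rfl fun p _ => (T_apply _ _ _).symm
    _ = ∑ i ∈ rb.index, ∑ q ∈ (rb2 i).index,
          T (rb.left i ⊗ₜ[k] ((rb2 i).left q ⊗ₜ[k] (rb2 i).right q)) :=
        coassoc_sum k A rb rb1 rb2 T
    _ = ∑ i ∈ rb.index, (Coalgebra.counit (rb.right i) : k) • (rb.left i * z) := by
        refine Finset.sum_congr rfl fun i _ => ?_
        have : ∀ q, T (rb.left i ⊗ₜ[k] ((rb2 i).left q ⊗ₜ[k] (rb2 i).right q))
            = rb.left i * (z * (S ((rb2 i).left q) * (rb2 i).right q)) := by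
          intro q; rw [T_apply, mul_assoc, mul_assoc]
        rw [Finset.sum_congr rfl fun q _ => this q, ← Finset.mul_sum, ← Finset.mul_sum, hS,
          HopfAlgebra.sum_antipode_mul_eq_smul (rb2 i), mul_smul_comm, mul_smul_comm, mul_one]
    _ = b * z := by simpa using counit_sum_right k A rb (LinearMap.mulRight k z)

open Coalgebra in
lemma stepB (act : H ⊗[k] A →ₗ[k] A) (d : A →ₗ[k] H) (hcm : HopfCrossedModule k A H act d)
    (a c e : A) (h f m : H) (b : A) (g : H)
    {ι ι' : Type*} (rb : Coalgebra.Repr k b ι) (rg : Coalgebra.Repr k g ι') :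
    ∑ i ∈ rb.index, ∑ j ∈ rg.index, (Coalgebra.counit h : k) •
        circ k A H
          (smashMul k A H act ((a ⊗ₜ[k] (d (rb.left i) * rg.left j)) ⊗ₜ[k] (c ⊗ₜ[k] f))
            ⊗ₜ[k] smashMul k A H act ((rb.right i ⊗ₜ[k] rg.right j) ⊗ₜ[k] (e ⊗ₜ[k] m)))
      = smashMul k A H act (circ k A H ((a ⊗ₜ[k] h) ⊗ₜ[k] (b ⊗ₜ[k] g))
          ⊗ₜ[k] circ k A H ((c ⊗ₜ[k] f) ⊗ₜ[k] (e ⊗ₜ[k] m))) := by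
  classical
  set rg1 : ∀ j : rg.ι, Coalgebra.Repr k (rg.left j) (H × H) := fun j => Coalgebra.Repr.arbitrary k _
  set rg2 : ∀ j : rg.ι, Coalgebra.Repr k (rg.right j) (H × H) := fun j => Coalgebra.Repr.arbitrary k _
  -- inner expansion of each (i,j) term
  have inner : ∀ i j,
      circ k A H
          (smashMul k A H act ((a ⊗ₜ[k] (d (rb.left i) * rg.left j)) ⊗ₜ[k] (c ⊗ₜ[k] f))
            ⊗ₜ[k] smashMul k A H act ((rb.right i ⊗ₜ[k] rg.right j) ⊗ₜ[k] (e ⊗ₜ[k] m)))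
        = (Coalgebra.counit f : k) • ∑ r ∈ (rg2 j).index,
            (a * act ((d (rb.left i) * rg.left j) ⊗ₜ[k] c)
                * (rb.right i * act ((rg2 j).left r ⊗ₜ[k] e)))
              ⊗ₜ[k] ((rg2 j).right r * m) := by
    intro i j
    set κ : H := d (rb.left i) * rg.left j with hκ
    set rκ : Coalgebra.Repr k κ (H × H) := Coalgebra.Repr.arbitrary k κ
    rw [smashMul_tmul k A H act a c κ f rκ,
      smashMul_tmul k A H act (rb.right i) e (rg.right j) m (rg2 j)]
    rw [TensorProduct.sum_tmul]
    simp only [TensorProduct.tmul_sum, map_sum, circ_tmul, Bialgebra.counit_mul]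
    rw [Finset.sum_comm, Finset.smul_sum]
    refine Finset.sum_congr rfl fun r _ => ?_
    set Y : A := act ((rg2 j).left r ⊗ₜ[k] e)
    set B : A := rb.right i * Y
    set Z : H := (rg2 j).right r * m
    set f' : H →ₗ[k] A ⊗[k] H :=
      (TensorProduct.mk k A H).flip Z ∘ₗ LinearMap.mulRight k B ∘ₗ LinearMap.mulLeft k a
        ∘ₗ act ∘ₗ (TensorProduct.mk k H A).flip c with hf'
    have hfap : ∀ x : H, f' x = (a * act (x ⊗ₜ[k] c) * B) ⊗ₜ[k] Z := by
      intro x; simp [hf']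
    calc ∑ p ∈ rκ.index,
          ((Coalgebra.counit (rκ.right p) : k) * (Coalgebra.counit f : k)) •
            (a * act (rκ.left p ⊗ₜ[k] c) * B) ⊗ₜ[k] Z
        = (Coalgebra.counit f : k) • ∑ p ∈ rκ.index,
            (Coalgebra.counit (rκ.right p) : k) • f' (rκ.left p) := by
          rw [Finset.smul_sum]
          refine Finset.sum_congr rfl fun p _ => ?_
          rw [hfap, mul_comm, mul_smul]
      _ = (Coalgebra.counit f : k) • f' κ := by rw [counit_sum_right k H rκ f']
      _ = (Coalgebra.counit f : k) • (a * act (κ ⊗ₜ[k] c) * B) ⊗ₜ[k] Z := by rw [hfap]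
  simp only [inner]
  -- factor all scalars out
  simp only [← Finset.smul_sum]
  -- compute the RHS
  rw [circ_tmul, circ_tmul]
  simp only [← TensorProduct.smul_tmul', TensorProduct.tmul_smul, map_smul]
  rw [smashMul_tmul k A H act (a * b) (c * e) g m rg]
  -- expand act(x ⊗ (c*e)) via act_mul_alg
  have act_alg : ∀ j, act (rg.left j ⊗ₜ[k] (c * e))
      = ∑ q ∈ (rg1 j).index,
          act ((rg1 j).left q ⊗ₜ[k] c) * act ((rg1 j).right q ⊗ₜ[k] e) := by
    intro j
    have hx := LinearMap.congr_fun hcm.act_mul_alg (rg.left j ⊗ₜ[k] (c ⊗ₜ[k] e))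
    simp only [LinearMap.coe_comp, Function.comp_apply, TensorProduct.map_tmul,
      LinearMap.id_coe, id_eq, LinearMap.mul'_apply] at hx
    rw [show (Coalgebra.comul (rg.left j) : H ⊗[k] H)
        = ∑ q ∈ (rg1 j).index, (rg1 j).left q ⊗ₜ[k] (rg1 j).right q from (rg1 j).eq.symm] at hx
    simp only [TensorProduct.sum_tmul, map_sum, LinearEquiv.coe_coe,
      tensorTensorTensorComm_tmul, TensorProduct.map_tmul, LinearMap.mul'_apply] at hx
    exact hx
  simp only [act_alg, Finset.mul_sum, TensorProduct.sum_tmul]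
  rw [smul_smul, smul_smul, mul_comm ((Coalgebra.counit h : k))]
  congr 1
  simp only [hcm.act_mul]
  set T : H ⊗[k] (H ⊗[k] H) →ₗ[k] A ⊗[k] H :=
    map (LinearMap.mul' k A
        ∘ₗ map (LinearMap.mulLeft k a ∘ₗ LinearMap.mulLeft k b
              ∘ₗ (act ∘ₗ (TensorProduct.mk k H A).flip c))
            (act ∘ₗ (TensorProduct.mk k H A).flip e))
      (LinearMap.mulRight k m) ∘ₗ (TensorProduct.assoc k H H H).symm.toLinearMap with hT
  have hTap : ∀ x y w : H, T (x ⊗ₜ[k] (y ⊗ₜ[k] w))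
      = (a * (b * act (x ⊗ₜ[k] c)) * act (y ⊗ₜ[k] e)) ⊗ₜ[k] (w * m) := by
    intro x y w; simp [hT, LinearMap.mul'_apply]
  calc ∑ i ∈ rb.index, ∑ j ∈ rg.index, ∑ r ∈ (rg2 j).index,
        (a * act (d (rb.left i) ⊗ₜ[k] act (rg.left j ⊗ₜ[k] c))
            * (rb.right i * act ((rg2 j).left r ⊗ₜ[k] e)))
          ⊗ₜ[k] ((rg2 j).right r * m)
      = ∑ j ∈ rg.index, ∑ r ∈ (rg2 j).index, ∑ i ∈ rb.index,
        (a * act (d (rb.left i) ⊗ₜ[k] act (rg.left j ⊗ₜ[k] c))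
            * (rb.right i * act ((rg2 j).left r ⊗ₜ[k] e)))
          ⊗ₜ[k] ((rg2 j).right r * m) := by
        rw [Finset.sum_comm]
        exact Finset.sum_congr rfl fun j _ => Finset.sum_comm
    _ = ∑ j ∈ rg.index, ∑ r ∈ (rg2 j).index,
          T (rg.left j ⊗ₜ[k] ((rg2 j).left r ⊗ₜ[k] (rg2 j).right r)) := by
        refine Finset.sum_congr rfl fun j _ => Finset.sum_congr rfl fun r _ => ?_
        set z : A := act (rg.left j ⊗ₜ[k] c) with hz
        set Y : A := act ((rg2 j).left r ⊗ₜ[k] e) with hY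
        set Z : H := (rg2 j).right r * m with hZ
        set L : A →ₗ[k] A ⊗[k] H :=
          (TensorProduct.mk k A H).flip Z ∘ₗ LinearMap.mulRight k Y
            ∘ₗ LinearMap.mulLeft k a with hL
        have hLap : ∀ s : A, L s = (a * s * Y) ⊗ₜ[k] Z := by intro s; simp [hL]
        have hterm : ∀ i, (a * act (d (rb.left i) ⊗ₜ[k] z) * (rb.right i * Y)) ⊗ₜ[k] Z
            = L (act (d (rb.left i) ⊗ₜ[k] z) * rb.right i) := by
          intro i; rw [hLap]; congr 1; noncomm_ring
        rw [Finset.sum_congr rfl fun i _ => hterm i, ← map_sum,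
          lemC k A H act d hcm b z rb, hTap, hLap]
    _ = ∑ j ∈ rg.index, ∑ q ∈ (rg1 j).index,
          T ((rg1 j).left q ⊗ₜ[k] ((rg1 j).right q ⊗ₜ[k] rg.right j)) :=
        (coassoc_sum k H rg rg1 rg2 T).symm
    _ = ∑ j ∈ rg.index, ∑ q ∈ (rg1 j).index,
          (a * b * (act ((rg1 j).left q ⊗ₜ[k] c) * act ((rg1 j).right q ⊗ₜ[k] e)))
            ⊗ₜ[k] (rg.right j * m) := by
        refine Finset.sum_congr rfl fun j _ => Finset.sum_congr rfl fun q _ => ?_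
        rw [hTap]
        congr 1
        noncomm_ring

lemma phi_assoc_tmul (act : H ⊗[k] A →ₗ[k] A) (u v : A ⊗[k] H)
    (q : (A ⊗[k] H) ⊗[k] H) (w2 : A ⊗[k] H) :
    phi k A H act u v ((TensorProduct.assoc k (A ⊗[k] H) H (A ⊗[k] H)) (q ⊗ₜ[k] w2))
      = circ k A H (smashMul k A H act (rho k A H q ⊗ₜ[k] u)
          ⊗ₜ[k] smashMul k A H act (w2 ⊗ₜ[k] v)) := by
  induction q using TensorProduct.induction_on with
  | zero => simp [TensorProduct.zero_tmul]
  | tmul y κ =>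
    simp only [TensorProduct.assoc_tmul, phi, LinearMap.coe_comp, Function.comp_apply,
      LinearEquiv.coe_coe, TensorProduct.assoc_symm_tmul, TensorProduct.map_tmul, rmul_apply]
  | add q1 q2 h1 h2 =>
    simp only [TensorProduct.add_tmul, map_add, h1, h2]

lemma key1 (act : H ⊗[k] A →ₗ[k] A) (u v : A ⊗[k] H) (z : (A ⊗[k] H) ⊗[k] (A ⊗[k] H)) :
    circ k A H (map (rmul k A H act u) (rmul k A H act v) z)
      = phi k A H act u v ((TensorProduct.assoc k (A ⊗[k] H) H (A ⊗[k] H)).toLinearMap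
          (map (DRmap k A H) LinearMap.id z)) := by
  induction z using TensorProduct.induction_on with
  | zero => simp
  | tmul w1 w2 =>
    simp only [TensorProduct.map_tmul, LinearMap.id_coe, id_eq, LinearEquiv.coe_coe]
    rw [phi_assoc_tmul, rho_DR, rmul_apply, rmul_apply]
  | add z1 z2 h1 h2 => simp only [map_add, h1, h2]

open Coalgebra in
lemma key2 (act : H ⊗[k] A →ₗ[k] A) (d : A →ₗ[k] H) (hcm : HopfCrossedModule k A H act d)
    (y : (A ⊗[k] H) ⊗[k] (A ⊗[k] H)) (u v : A ⊗[k] H) :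
    phi k A H act u v (map LinearMap.id (DLmap k A H d) y)
      = smashMul k A H act (circ k A H y ⊗ₜ[k] circ k A H (u ⊗ₜ[k] v)) := by
  induction y using TensorProduct.induction_on with
  | zero => simp
  | add y1 y2 h1 h2 => simp only [map_add, h1, h2, TensorProduct.add_tmul]
  | tmul w1 w2 =>
    induction w1 using TensorProduct.induction_on with
    | zero => simp [TensorProduct.zero_tmul]
    | add x x' hx hx' =>
      simp only [TensorProduct.add_tmul, map_add, hx, hx']
    | tmul a h =>
      induction w2 using TensorProduct.induction_on with
      | zero => simp [TensorProduct.tmul_zero]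
      | add w w' hw hw' =>
        simp only [TensorProduct.tmul_add, map_add, hw, hw', TensorProduct.add_tmul]
      | tmul b g =>
        rw [TensorProduct.map_tmul]
        set rb := Coalgebra.Repr.arbitrary k b with hrb
        set rg := Coalgebra.Repr.arbitrary k g with hrg
        rw [show (LinearMap.id : A ⊗[k] H →ₗ[k] A ⊗[k] H) (a ⊗ₜ[k] h) = a ⊗ₜ[k] h from rfl,
          DLmap_tmul k A H d b g rb rg]
        simp only [TensorProduct.tmul_sum, map_sum, phi_tmul]
        induction u using TensorProduct.induction_on with
        | zero => simp [TensorProduct.tmul_zero, TensorProduct.zero_tmul]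
        | add u1 u2 h1 h2 =>
          simp only [TensorProduct.tmul_add, TensorProduct.add_tmul, map_add, smul_add,
            Finset.sum_add_distrib, h1, h2]
        | tmul c f =>
          induction v using TensorProduct.induction_on with
          | zero => simp [TensorProduct.tmul_zero, TensorProduct.zero_tmul]
          | add v1 v2 h1 h2 =>
            simp only [TensorProduct.tmul_add, TensorProduct.add_tmul, map_add, smul_add,
              Finset.sum_add_distrib, h1, h2]
          | tmul e m => exact stepB k A H act d hcm a c e h f m b g rb rg
/-- Theorem 2.6 (part): the quantum interchange law: for `Σᵢ xᵢ⊗yᵢ ∈ H1□H1` and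
`u, v ∈ H1`, `Σᵢ (xᵢu)∘(yᵢv) = Σᵢ (xᵢ∘yᵢ)(u∘v)`. -/
theorem statement9 (act : H ⊗[k] A →ₗ[k] A) (d : A →ₗ[k] H)
    (hcm : HopfCrossedModule k A H act d) :
    ∀ x ∈ cot k A H d, ∀ u v : A ⊗[k] H,
      circ k A H (map (rmul k A H act u) (rmul k A H act v) x)
        = smashMul k A H act (circ k A H x ⊗ₜ[k] circ k A H (u ⊗ₜ[k] v)) := by
  intro x hx u v
  have h2 : (TensorProduct.assoc k (A ⊗[k] H) H (A ⊗[k] H)).toLinearMap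
      (map (DRmap k A H) LinearMap.id x) = map LinearMap.id (DLmap k A H d) x := hx
  rw [key1 k A H act u v x, h2, key2 k A H act d hcm x u v]

end
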